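/- arXiv:2410.23819 — 3 statements merged into one kernel-verified Lean document; each statement's English description precedes it below -/
import Mathlib

section
/- Let A ∈ ℝ^{m×r} and B ∈ ℝ^{n×r} be real matrices satisfying AᵀA = BᵀB. Then the nuclear norm of ABᵀ equals (‖A‖_F² + ‖B‖_F²)/2. -/
open Matrix

/-- Squared Frobenius norm of a real matrix. -/
noncomputable def frobSq {m n : ℕ} (A : Matrix (Fin m) (Fin n) ℝ) : ℝ :=
  ∑ i, ∑ j, (A i j) ^ 2

/-- Frobenius norm. -/
noncomputable def frobNorm {m n : ℕ} (A : Matrix (Fin m) (Fin n) ℝ) : ℝ :=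
  Real.sqrt (frobSq A)

lemma wwT_posSemidef {m n : ℕ} (W : Matrix (Fin m) (Fin n) ℝ) :
    (W * Wᵀ).PosSemidef := by
  simpa [Matrix.conjTranspose_eq_transpose_of_trivial] using
    W.posSemidef_self_mul_conjTranspose

/-- Nuclear norm: trace of the PSD square root of `W * Wᵀ`. -/
noncomputable def nuclearNorm {m n : ℕ} (W : Matrix (Fin m) (Fin n) ℝ) : ℝ :=
  ((wwT_posSemidef W).1.eigenvectorUnitary.1 *
    diagonal ((RCLike.ofReal : ℝ → ℝ) ∘ (√·) ∘ (wwT_posSemidef W).1.eigenvalues) *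
    (star (wwT_posSemidef W).1.eigenvectorUnitary : Matrix (Fin m) (Fin m) ℝ)).trace

/-- if `AᵀA = BᵀB` then `‖ABᵀ‖_* = (‖A‖_F² + ‖B‖_F²)/2`. -/
theorem nuclearNorm_mul_transpose_of_balanced {m n r : ℕ}
    (A : Matrix (Fin m) (Fin r) ℝ) (B : Matrix (Fin n) (Fin r) ℝ)
    (hbal : Aᵀ * A = Bᵀ * B) :
    nuclearNorm (A * Bᵀ) = (frobSq A + frobSq B) / 2 := by
  have hAAT : (A * Aᵀ).PosSemidef := wwT_posSemidef A
  have key : (A * Aᵀ) ^ 2 = (A * Bᵀ) * (A * Bᵀ)ᵀ := by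
    rw [pow_two, Matrix.transpose_mul, Matrix.transpose_transpose]
    calc A * Aᵀ * (A * Aᵀ) = A * (Aᵀ * A) * Aᵀ := by
          simp only [Matrix.mul_assoc]
      _ = A * (Bᵀ * B) * Aᵀ := by rw [hbal]
      _ = A * Bᵀ * (B * Aᵀ) := by simp only [Matrix.mul_assoc]
  have hsqrt : ((wwT_posSemidef (A * Bᵀ)).1.eigenvectorUnitary.1 *
      diagonal ((RCLike.ofReal : ℝ → ℝ) ∘ (√·) ∘ (wwT_posSemidef (A * Bᵀ)).1.eigenvalues) *
      (star (wwT_posSemidef (A * Bᵀ)).1.eigenvectorUnitary : Matrix (Fin m) (Fin m) ℝ))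
      = A * Aᵀ := by
    open scoped MatrixOrder in
    have h1 := (wwT_posSemidef (A * Bᵀ)).1.cfc_eq Real.sqrt
    rw [IsHermitian.cfc, Unitary.conjStarAlgAut_apply] at h1
    open scoped MatrixOrder in
    rw [← h1, ← cfcₙ_eq_cfc, ← CFC.sqrt_eq_real_sqrt _
      (Matrix.nonneg_iff_posSemidef.mpr (wwT_posSemidef (A * Bᵀ)))]
    open scoped MatrixOrder in
    exact CFC.sqrt_unique (by rw [← key, sq]) (Matrix.nonneg_iff_posSemidef.mpr hAAT)
  have htrA : (A * Aᵀ).trace = frobSq A := by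
    simp [Matrix.trace, Matrix.mul_apply, frobSq, Matrix.diag, sq]
  have hAB : frobSq A = frobSq B := by
    have h1 : (Aᵀ * A).trace = frobSq A := by
      rw [frobSq, Finset.sum_comm]
      simp [Matrix.trace, Matrix.mul_apply, Matrix.diag, sq]
    have h2 : (Bᵀ * B).trace = frobSq B := by
      rw [frobSq, Finset.sum_comm]
      simp [Matrix.trace, Matrix.mul_apply, Matrix.diag, sq]
    rw [← h1, ← h2, hbal]
  rw [nuclearNorm, hsqrt, htrA, ← hAB]
  ring
end

section
/- Let A ∈ ℝ^{m×r} and B ∈ ℝ^{n×r} satisfy AᵀA = BᵀB. Then there exist orthogonal matrices U ∈ O(m), V ∈ O(n), O ∈ O(r), and a diagonal matrix S with nonnegative entries such that A = U Σ Oᵀ and B = V Σ Oᵀ, where Σ is the m×r (resp. n×r) matrix with √S in its top r×r block and zeros below, and U S Vᵀ restricted appropriately gives an SVD of ABᵀ. -/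
open Matrix

/-- The `m × r` matrix with the entrywise square roots of the diagonal of `S`
in its top `r × r` block and zeros below. -/
noncomputable def padSqrt (m r : ℕ) (S : Matrix (Fin r) (Fin r) ℝ) :
    Matrix (Fin m) (Fin r) ℝ :=
  Matrix.of fun i j => if (i : ℕ) = (j : ℕ) then Real.sqrt (S j j) else 0

/-- The `m × n` rectangular-diagonal matrix whose diagonal starts with the diagonal
of the `r × r` matrix `S` and is padded with zeros. -/
noncomputable def padDiag (m n r : ℕ) (S : Matrix (Fin r) (Fin r) ℝ) :
    Matrix (Fin m) (Fin n) ℝ :=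
  Matrix.of fun i j =>
    if h : (i : ℕ) = (j : ℕ) ∧ (i : ℕ) < r then S ⟨i, h.2⟩ ⟨i, h.2⟩ else 0

/-- Auxiliary: a matrix `C` with `CᵀC = S` diagonal factors as `U * padSqrt`
with `U` orthogonal. -/
lemma exists_orth_factor {m r : ℕ} (hm : r ≤ m)
    (C : Matrix (Fin m) (Fin r) ℝ) (S : Matrix (Fin r) (Fin r) ℝ)
    (hdiag : ∀ i j, i ≠ j → S i j = 0)
    (hC : Cᵀ * C = S) :
    ∃ U : Matrix (Fin m) (Fin m) ℝ, Uᵀ * U = 1 ∧ U * padSqrt m r S = C := by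
  have hSd : ∀ j k, S j k = ∑ p, C p j * C p k := by
    intro j k
    rw [← hC]
    simp [Matrix.mul_apply, Matrix.transpose_apply]
  have hSnn : ∀ j, 0 ≤ S j j := by
    intro j
    rw [hSd j j]
    exact Finset.sum_nonneg fun p _ => mul_self_nonneg _
  set col : Fin r → EuclideanSpace ℝ (Fin m) := fun j => WithLp.toLp 2 (fun p => C p j) with hcol
  have hinner : ∀ j k, (inner ℝ (col j) (col k) : ℝ) = S j k := by
    intro j k
    rw [hSd j k]
    simp [col, PiLp.inner_apply, mul_comm]
  set v : Fin m → EuclideanSpace ℝ (Fin m) := fun i =>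
    if h : (i : ℕ) < r then (Real.sqrt (S ⟨i, h⟩ ⟨i, h⟩))⁻¹ • col ⟨i, h⟩ else 0 with hv
  set s : Set (Fin m) := {i | ∃ h : (i : ℕ) < r, 0 < S ⟨i, h⟩ ⟨i, h⟩} with hs
  have hortho : Orthonormal ℝ (s.restrict v) := by
    rw [orthonormal_iff_ite]
    rintro ⟨i, hi, hipos⟩ ⟨j, hj, hjpos⟩
    change inner ℝ (v i) (v j) = _
    simp only [Set.restrict_apply, hv, dif_pos hi, dif_pos hj]
    rw [real_inner_smul_left, real_inner_smul_right, hinner]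
    by_cases hij : i = j
    · subst hij
      simp only [Subtype.mk.injEq, if_pos rfl]
      rw [← Real.sqrt_mul_self (le_of_lt hipos)]
      field_simp
      simp [Real.sq_sqrt, Real.sqrt_nonneg]
    · have : (⟨i, hi⟩ : Fin r) ≠ ⟨j, hj⟩ := by
        simp only [ne_eq, Fin.mk.injEq]
        exact fun h => hij (Fin.ext h)
      rw [hdiag _ _ this]
      simp [Subtype.mk.injEq, hij]
  have hcard : Module.finrank ℝ (EuclideanSpace ℝ (Fin m)) = Fintype.card (Fin m) := by
    simp
  obtain ⟨b, hb⟩ := hortho.exists_orthonormalBasis_extension_of_card_eq hcard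
  refine ⟨Matrix.of fun p i => b i p, ?_, ?_⟩
  · ext i j
    have := (orthonormal_iff_ite.mp b.orthonormal) i j
    rw [PiLp.inner_apply] at this
    simp only [RCLike.inner_apply, conj_trivial] at this
    simpa [Matrix.mul_apply, Matrix.one_apply, mul_comm] using this
  · ext p j
    have hjm : (j : ℕ) < m := lt_of_lt_of_le j.2 hm
    have hsum : (Matrix.of (fun p i => b i p) * padSqrt m r S) p j
        = b ⟨(j : ℕ), hjm⟩ p * Real.sqrt (S j j) := by
      rw [Matrix.mul_apply]
      rw [Finset.sum_eq_single (⟨(j : ℕ), hjm⟩ : Fin m)]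
      · simp [padSqrt]
      · intro k _ hk
        have : (k : ℕ) ≠ (j : ℕ) := by
          intro h; exact hk (Fin.ext h)
        simp [padSqrt, this]
      · simp
    rw [hsum]
    rcases lt_or_eq_of_le (hSnn j) with hpos | hzero
    · have hmem : (⟨(j : ℕ), hjm⟩ : Fin m) ∈ s := by
        refine ⟨j.2, ?_⟩
        convert hpos using 2
      rw [hb _ hmem]
      simp only [hv, dif_pos (show ((⟨(j : ℕ), hjm⟩ : Fin m) : ℕ) < r from j.2)]
      have hje : (⟨((⟨(j : ℕ), hjm⟩ : Fin m) : ℕ), j.2⟩ : Fin r) = j := Fin.ext rfl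
      rw [hje]
      simp only [PiLp.smul_apply, smul_eq_mul]
      have hsq : Real.sqrt (S j j) ≠ 0 := by positivity
      field_simp [col]
      simp [col]
    · have hz : ∀ q, C q j = 0 := by
        intro q
        have h0 : ∑ p, C p j * C p j = 0 := by rw [← hSd j j, ← hzero]
        have := (Finset.sum_eq_zero_iff_of_nonneg
          (fun p _ => mul_self_nonneg (C p j))).mp h0 q (Finset.mem_univ q)
        exact mul_self_eq_zero.mp this
      rw [← hzero, Real.sqrt_zero, mul_zero, hz]

lemma padSqrt_mul_padSqrt_transpose {m n r : ℕ} (S : Matrix (Fin r) (Fin r) ℝ)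
    (hS : ∀ i, 0 ≤ S i i) :
    padSqrt m r S * (padSqrt n r S)ᵀ = padDiag m n r S := by
  ext i j
  rw [Matrix.mul_apply]
  by_cases hi : (i : ℕ) < r
  · rw [Finset.sum_eq_single (⟨(i : ℕ), hi⟩ : Fin r)]
    · simp only [padSqrt, padDiag, Matrix.transpose_apply, Matrix.of_apply]
      by_cases hij : (i : ℕ) = (j : ℕ)
      · rw [if_pos trivial, if_pos hij.symm, dif_pos ⟨hij, hi⟩]
        exact Real.mul_self_sqrt (hS _)
      · rw [if_pos trivial, if_neg (fun h : (j : ℕ) = (i : ℕ) => hij h.symm),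
          mul_zero, dif_neg (by tauto)]
    · intro k _ hk
      have : (i : ℕ) ≠ (k : ℕ) := fun h => hk (Fin.ext h.symm)
      simp [padSqrt, this]
    · simp
  · have hall : ∀ k : Fin r, (i : ℕ) ≠ (k : ℕ) := by
      intro k h
      exact hi (h ▸ k.2)
    rw [Finset.sum_eq_zero, padDiag]
    · simp only [Matrix.of_apply]
      rw [dif_neg (by tauto)]
    · intro k _
      simp [padSqrt, hall k]

/-- a balanced pair `AᵀA = BᵀB` (with `m, n ≥ r`) factors as
`A = U Σ Oᵀ`, `B = V Σ Oᵀ` with `U, V, O` orthogonal, `S` diagonal nonnegative,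
and `ABᵀ = U (pad S) Vᵀ` is an SVD of `ABᵀ`. -/
theorem balanced_factorization {m n r : ℕ} (hm : r ≤ m) (hn : r ≤ n)
    (A : Matrix (Fin m) (Fin r) ℝ) (B : Matrix (Fin n) (Fin r) ℝ)
    (hbal : Aᵀ * A = Bᵀ * B) :
    ∃ (U : Matrix (Fin m) (Fin m) ℝ) (V : Matrix (Fin n) (Fin n) ℝ)
      (O : Matrix (Fin r) (Fin r) ℝ) (S : Matrix (Fin r) (Fin r) ℝ),
      Uᵀ * U = 1 ∧ Vᵀ * V = 1 ∧ Oᵀ * O = 1 ∧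
      (∀ i j, i ≠ j → S i j = 0) ∧ (∀ i, 0 ≤ S i i) ∧
      A = U * padSqrt m r S * Oᵀ ∧
      B = V * padSqrt n r S * Oᵀ ∧
      A * Bᵀ = U * padDiag m n r S * Vᵀ := by
  classical
  have hPSD : (Aᵀ * A).PosSemidef := by
    simpa [Matrix.conjTranspose_eq_transpose_of_trivial] using
      Matrix.posSemidef_conjTranspose_mul_self A
  have hG : (Aᵀ * A).IsHermitian := hPSD.1
  set O : Matrix (Fin r) (Fin r) ℝ := (hG.eigenvectorUnitary : Matrix (Fin r) (Fin r) ℝ)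
    with hOdef
  set S : Matrix (Fin r) (Fin r) ℝ := Matrix.diagonal hG.eigenvalues with hSdef
  have hspec : Aᵀ * A = O * S * Oᵀ := by
    have h := hG.spectral_theorem
    simpa [RCLike.ofReal_real_eq_id, Matrix.star_eq_conjTranspose,
      Matrix.conjTranspose_eq_transpose_of_trivial, hOdef, hSdef] using h
  have hOO : Oᵀ * O = 1 := by
    have h := Matrix.mem_unitaryGroup_iff'.mp hG.eigenvectorUnitary.2
    simpa [Matrix.star_eq_conjTranspose,
      Matrix.conjTranspose_eq_transpose_of_trivial, hOdef] using h
  have hOO' : O * Oᵀ = 1 := by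
    have h := Matrix.mem_unitaryGroup_iff.mp hG.eigenvectorUnitary.2
    simpa [Matrix.star_eq_conjTranspose,
      Matrix.conjTranspose_eq_transpose_of_trivial, hOdef] using h
  have hdiag : ∀ i j, i ≠ j → S i j = 0 := fun i j h => Matrix.diagonal_apply_ne _ h
  have hSnn : ∀ i, 0 ≤ S i i := by
    intro i
    rw [hSdef, Matrix.diagonal_apply_eq]
    exact hPSD.eigenvalues_nonneg i
  have key : ∀ {k : ℕ} (M : Matrix (Fin k) (Fin r) ℝ), Mᵀ * M = Aᵀ * A →
      (M * O)ᵀ * (M * O) = S := by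
    intro k M hM
    rw [Matrix.transpose_mul, Matrix.mul_assoc, ← Matrix.mul_assoc Mᵀ M O, hM, hspec,
      Matrix.mul_assoc (O * S) Oᵀ O, hOO, Matrix.mul_one, ← Matrix.mul_assoc,
      hOO, Matrix.one_mul]
  obtain ⟨U, hU1, hU2⟩ := exists_orth_factor hm (A * O) S hdiag (key A rfl)
  obtain ⟨V, hV1, hV2⟩ := exists_orth_factor hn (B * O) S hdiag (key B hbal.symm)
  have hA : A = U * padSqrt m r S * Oᵀ := by
    rw [hU2, Matrix.mul_assoc, hOO', Matrix.mul_one]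
  have hB : B = V * padSqrt n r S * Oᵀ := by
    rw [hV2, Matrix.mul_assoc, hOO', Matrix.mul_one]
  refine ⟨U, V, O, S, hU1, hV1, hOO, hdiag, hSnn, hA, hB, ?_⟩
  rw [hA, hB]
  simp only [Matrix.transpose_mul, Matrix.transpose_transpose, Matrix.mul_assoc]
  rw [← Matrix.mul_assoc Oᵀ O, hOO, Matrix.one_mul,
    ← Matrix.mul_assoc (padSqrt m r S) (padSqrt n r S)ᵀ Vᵀ,
    padSqrt_mul_padSqrt_transpose S hSnn]
end

section
/- Let G be a real m×n matrix, λ > 0, and suppose A ∈ ℝ^{m×r}, B ∈ ℝ^{n×r} satisfy λA = GB and λB = GᵀA. Then AᵀA = BᵀB. -/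
open Matrix

/-- the stationarity conditions `λA = GB`, `λB = GᵀA` (λ > 0)
imply balancedness `AᵀA = BᵀB`. -/
theorem balanced_of_stationary {m n r : ℕ}
    (G : Matrix (Fin m) (Fin n) ℝ) (lam : ℝ) (hlam : 0 < lam)
    (A : Matrix (Fin m) (Fin r) ℝ) (B : Matrix (Fin n) (Fin r) ℝ)
    (hA : lam • A = G * B) (hB : lam • B = Gᵀ * A) :
    Aᵀ * A = Bᵀ * B := by
  have key : lam • (Aᵀ * A) = lam • (Bᵀ * B) := by
    calc lam • (Aᵀ * A) = Aᵀ * (lam • A) := by rw [Matrix.mul_smul]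
    _ = Aᵀ * (G * B) := by rw [hA]
    _ = (Gᵀ * A)ᵀ * B := by rw [Matrix.transpose_mul, Matrix.transpose_transpose, Matrix.mul_assoc]
    _ = (lam • B)ᵀ * B := by rw [hB]
    _ = lam • (Bᵀ * B) := by rw [Matrix.transpose_smul, Matrix.smul_mul]
  exact smul_right_injective _ hlam.ne' key
end
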